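/- There exists a unique tuple (x̂_0, ŵ_0,…,ŵ_{N−1}, η_1,…,η_N) with x̂_0 ∈ ℝ^n, ŵ_k ∈ ℝ^l and η_k ∈ ℝ^m satisfying |η_k| ≤ ε componentwise for all k, that minimizes the ε-insensitive cost J(x̂_0, ŵ, η) = ½[(x̂_0 − x̄_0)ᵀP(x̂_0 − x̄_0) + Σ_{k=0}^{N−1} ŵ_kᵀQŵ_k + Σ_{k=1}^{N} (y_k − C x̂_k − η_k)ᵀR(y_k − C x̂_k − η_k)] over all such feasible tuples, where x̂_1,…,x̂_N are generated from x̂_0 and ŵ by x̂_{k+1} = A x̂_k + B ŵ_k. -/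

import Mathlib

open Matrix

/-- State trajectory generated by `x_{k+1} = A x_k + B w_k` from initial state `x0`. -/
def traj {n l : ℕ} (A : Matrix (Fin n) (Fin n) ℝ) (B : Matrix (Fin n) (Fin l) ℝ)
    (x0 : Fin n → ℝ) (w : ℕ → Fin l → ℝ) : ℕ → Fin n → ℝ
  | 0 => x0
  | k + 1 => A *ᵥ traj A B x0 w k + B *ᵥ w k

/-- The ε-insensitive cost `J(x0, w, η)` for a tuple with disturbances `w_0, …, w_{N−1}`
(only the values `w_0, …, w_{N−1}` enter the cost and the generated states `x̂_1, …, x̂_N`). -/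
noncomputable def epsCostFin {n l m : ℕ} (N : ℕ)
    (A : Matrix (Fin n) (Fin n) ℝ) (B : Matrix (Fin n) (Fin l) ℝ)
    (C : Matrix (Fin m) (Fin n) ℝ)
    (P : Matrix (Fin n) (Fin n) ℝ) (Q : Matrix (Fin l) (Fin l) ℝ)
    (R : Matrix (Fin m) (Fin m) ℝ)
    (xbar : Fin n → ℝ) (y : ℕ → Fin m → ℝ)
    (x0 : Fin n → ℝ) (w : Fin N → Fin l → ℝ) (η : Fin N → Fin m → ℝ) : ℝ :=
  let w' : ℕ → Fin l → ℝ := fun k => if h : k < N then w ⟨k, h⟩ else 0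
  (1 / 2) * ((x0 - xbar) ⬝ᵥ P *ᵥ (x0 - xbar)
    + ∑ k : Fin N, w k ⬝ᵥ Q *ᵥ w k
    + ∑ k : Fin N,
        (y ((k : ℕ) + 1) - C *ᵥ traj A B x0 w' ((k : ℕ) + 1) - η k) ⬝ᵥ
          R *ᵥ (y ((k : ℕ) + 1) - C *ᵥ traj A B x0 w' ((k : ℕ) + 1) - η k))

section Aux

private lemma dot_nonneg' {d : ℕ} {M : Matrix (Fin d) (Fin d) ℝ} (hM : M.PosSemidef)
    (v : Fin d → ℝ) : 0 ≤ v ⬝ᵥ M *ᵥ v := by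
  simpa using hM.re_dotProduct_nonneg v

private lemma dot_pos' {d : ℕ} {M : Matrix (Fin d) (Fin d) ℝ} (hM : M.PosDef)
    {v : Fin d → ℝ} (hv : v ≠ 0) : 0 < v ⬝ᵥ M *ᵥ v := by
  simpa using hM.re_dotProduct_pos hv

private lemma eq_zero_of_dot_le_zero {d : ℕ} {M : Matrix (Fin d) (Fin d) ℝ} (hM : M.PosDef)
    {v : Fin d → ℝ} (h : v ⬝ᵥ M *ᵥ v ≤ 0) : v = 0 := by
  by_contra hv
  exact absurd h (not_le.2 (dot_pos' hM hv))

private lemma quad_mid' {d : ℕ} (M : Matrix (Fin d) (Fin d) ℝ) (a b : Fin d → ℝ) :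
    ((1/2 : ℝ) • (a + b)) ⬝ᵥ M *ᵥ ((1/2 : ℝ) • (a + b))
      = (a ⬝ᵥ M *ᵥ a + b ⬝ᵥ M *ᵥ b) / 2
        - ((1/2 : ℝ) • (a - b)) ⬝ᵥ M *ᵥ ((1/2 : ℝ) • (a - b)) := by
  simp only [smul_dotProduct, dotProduct_smul, mulVec_smul, mulVec_add, mulVec_sub,
    add_dotProduct, sub_dotProduct, dotProduct_add, dotProduct_sub, smul_eq_mul]
  ring

private lemma continuous_dm {α : Type*} [TopologicalSpace α] {d e : ℕ}
    (M : Matrix (Fin d) (Fin e) ℝ) {u : α → Fin d → ℝ} {v : α → Fin e → ℝ}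
    (hu : Continuous u) (hv : Continuous v) :
    Continuous fun a => u a ⬝ᵥ M *ᵥ v a := by
  simp only [dotProduct, mulVec]
  exact continuous_finset_sum _ fun i _ =>
    ((continuous_apply i).comp hu).mul <| continuous_finset_sum _ fun j _ =>
      continuous_const.mul ((continuous_apply j).comp hv)

private lemma continuous_mulVec' {α : Type*} [TopologicalSpace α] {d e : ℕ}
    (M : Matrix (Fin d) (Fin e) ℝ) {v : α → Fin e → ℝ} (hv : Continuous v) :
    Continuous fun a => M *ᵥ v a := by
  refine continuous_pi fun i => ?_
  simp only [mulVec, dotProduct]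
  exact continuous_finset_sum _ fun j _ =>
      continuous_const.mul ((continuous_apply j).comp hv)

private lemma continuous_traj {α : Type*} [TopologicalSpace α] {n l : ℕ}
    (A : Matrix (Fin n) (Fin n) ℝ) (B : Matrix (Fin n) (Fin l) ℝ)
    {x0 : α → Fin n → ℝ} {w : α → ℕ → Fin l → ℝ}
    (hx : Continuous x0) (hw : ∀ k, Continuous fun a => w a k) :
    ∀ j, Continuous fun a => traj A B (x0 a) (w a) j
  | 0 => hx
  | j+1 => by
    have ih := continuous_traj A B hx hw j
    simp only [traj]
    exact (continuous_mulVec' A ih).add (continuous_mulVec' B (hw j))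

private lemma traj_mid {n l : ℕ} (A : Matrix (Fin n) (Fin n) ℝ) (B : Matrix (Fin n) (Fin l) ℝ)
    (x1 x2 : Fin n → ℝ) (w1 w2 : ℕ → Fin l → ℝ) :
    ∀ k, traj A B ((1/2 : ℝ) • (x1 + x2)) (fun j => (1/2 : ℝ) • (w1 j + w2 j)) k
      = (1/2 : ℝ) • (traj A B x1 w1 k + traj A B x2 w2 k)
  | 0 => rfl
  | k+1 => by
    have ih := traj_mid A B x1 x2 w1 w2 k
    simp only [traj, ih, mulVec_smul, mulVec_add]
    funext i
    simp only [Pi.add_apply, Pi.smul_apply, smul_eq_mul]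
    ring

private lemma posdef_bound {d : ℕ} {M : Matrix (Fin d) (Fin d) ℝ} (hM : M.PosDef) :
    ∃ μ > 0, ∀ v : Fin d → ℝ, μ * ‖v‖ ^ 2 ≤ v ⬝ᵥ M *ᵥ v := by
  rcases Nat.eq_zero_or_pos d with hd | hd
  · refine ⟨1, one_pos, fun v => ?_⟩
    subst hd
    have hv : v = 0 := Subsingleton.elim _ _
    have h0 : ‖v‖ = 0 := by rw [hv]; exact norm_zero
    rw [h0, hv]
    simp
  · haveI : Nonempty (Fin d) := ⟨⟨0, hd⟩⟩
    have hne : (Metric.sphere (0 : Fin d → ℝ) 1).Nonempty := by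
      refine ⟨fun _ => 1, ?_⟩
      simp [mem_sphere_iff_norm]
    have hcont : Continuous fun v : Fin d → ℝ => v ⬝ᵥ M *ᵥ v :=
      continuous_dm M continuous_id continuous_id
    obtain ⟨u, hu, hmin⟩ := (isCompact_sphere (0 : Fin d → ℝ) 1).exists_isMinOn hne
      hcont.continuousOn
    have hu1 : ‖u‖ = 1 := by simpa using hu
    have hμ : 0 < u ⬝ᵥ M *ᵥ u := by
      refine dot_pos' hM fun h => ?_
      rw [h] at hu1; simp at hu1
    refine ⟨_, hμ, fun v => ?_⟩
    rcases eq_or_ne v 0 with rfl | hv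
    · simp
    · have hnv : 0 < ‖v‖ := norm_pos_iff.2 hv
      have hu' : (‖v‖⁻¹ • v) ∈ Metric.sphere (0 : Fin d → ℝ) 1 := by
        simp [mem_sphere_iff_norm, norm_smul, abs_of_pos (inv_pos.2 hnv),
          inv_mul_cancel₀ hnv.ne']
      have h1 : u ⬝ᵥ M *ᵥ u ≤ (‖v‖⁻¹ • v) ⬝ᵥ M *ᵥ (‖v‖⁻¹ • v) := isMinOn_iff.mp hmin _ hu'
      have h2 : (‖v‖⁻¹ • v) ⬝ᵥ M *ᵥ (‖v‖⁻¹ • v) = ‖v‖⁻¹ ^ 2 * (v ⬝ᵥ M *ᵥ v) := by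
        simp only [smul_dotProduct, mulVec_smul, dotProduct_smul, smul_eq_mul]; ring
      rw [h2] at h1
      calc (u ⬝ᵥ M *ᵥ u) * ‖v‖ ^ 2 ≤ (‖v‖⁻¹ ^ 2 * (v ⬝ᵥ M *ᵥ v)) * ‖v‖ ^ 2 :=
            mul_le_mul_of_nonneg_right h1 (sq_nonneg _)
        _ = v ⬝ᵥ M *ᵥ v := by field_simp

/-- Extension of a finitely-indexed disturbance sequence by zero. -/
private def extw {l N : ℕ} (w : Fin N → Fin l → ℝ) : ℕ → Fin l → ℝ :=
  fun k => if h : k < N then w ⟨k, h⟩ else 0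

private lemma epsCostFin_eq {n l m N : ℕ}
    (A : Matrix (Fin n) (Fin n) ℝ) (B : Matrix (Fin n) (Fin l) ℝ)
    (C : Matrix (Fin m) (Fin n) ℝ)
    (P : Matrix (Fin n) (Fin n) ℝ) (Q : Matrix (Fin l) (Fin l) ℝ)
    (R : Matrix (Fin m) (Fin m) ℝ)
    (xbar : Fin n → ℝ) (y : ℕ → Fin m → ℝ)
    (x0 : Fin n → ℝ) (w : Fin N → Fin l → ℝ) (η : Fin N → Fin m → ℝ) :
    epsCostFin N A B C P Q R xbar y x0 w η =
      (1 / 2) * ((x0 - xbar) ⬝ᵥ P *ᵥ (x0 - xbar)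
        + ∑ k : Fin N, w k ⬝ᵥ Q *ᵥ w k
        + ∑ k : Fin N,
            (y ((k : ℕ) + 1) - C *ᵥ traj A B x0 (extw w) ((k : ℕ) + 1) - η k) ⬝ᵥ
              R *ᵥ (y ((k : ℕ) + 1) - C *ᵥ traj A B x0 (extw w) ((k : ℕ) + 1) - η k)) := rfl

private lemma extw_mid {l N : ℕ} (w1 w2 : Fin N → Fin l → ℝ) :
    extw (fun k => (1/2 : ℝ) • (w1 k + w2 k)) =
      fun j => (1/2 : ℝ) • (extw w1 j + extw w2 j) := by
  funext j
  by_cases h : j < N <;> simp [extw, h]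

end Aux

/-- **Existence and uniqueness of the ε-insensitive optimal estimate.**
There is a unique feasible tuple `(x̂_0, ŵ_0, …, ŵ_{N−1}, η_1, …, η_N)` with `|η_k| ≤ ε`
componentwise minimizing the ε-insensitive cost `J` over all feasible tuples. -/
theorem eps_insensitive_minimizer_existsUnique
    (n l m N : ℕ) (hN : 1 ≤ N)
    (A : Matrix (Fin n) (Fin n) ℝ) (B : Matrix (Fin n) (Fin l) ℝ)
    (C : Matrix (Fin m) (Fin n) ℝ)
    (P : Matrix (Fin n) (Fin n) ℝ) (Q : Matrix (Fin l) (Fin l) ℝ)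
    (R : Matrix (Fin m) (Fin m) ℝ)
    (hP : P.PosDef) (hQ : Q.PosDef) (hR : R.PosDef)
    (xbar : Fin n → ℝ) (y : ℕ → Fin m → ℝ)
    (ε : Fin m → ℝ) (hε : ∀ i, 0 < ε i) :
    ∃! t : (Fin n → ℝ) × (Fin N → Fin l → ℝ) × (Fin N → Fin m → ℝ),
      (∀ (k : Fin N) (i : Fin m), |t.2.2 k i| ≤ ε i) ∧
        ∀ t' : (Fin n → ℝ) × (Fin N → Fin l → ℝ) × (Fin N → Fin m → ℝ),
          (∀ (k : Fin N) (i : Fin m), |t'.2.2 k i| ≤ ε i) →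
          epsCostFin N A B C P Q R xbar y t.1 t.2.1 t.2.2
            ≤ epsCostFin N A B C P Q R xbar y t'.1 t'.2.1 t'.2.2 := by
  classical
  -- abbreviations
  set E := (Fin n → ℝ) × (Fin N → Fin l → ℝ) × (Fin N → Fin m → ℝ) with hE
  let f : E → ℝ := fun t => epsCostFin N A B C P Q R xbar y t.1 t.2.1 t.2.2
  let S : Set E := {t | ∀ (k : Fin N) (i : Fin m), |t.2.2 k i| ≤ ε i}
  -- continuity of the cost
  have hwcont : ∀ j : ℕ, Continuous fun t : E => extw t.2.1 j := by
    intro j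
    by_cases h : j < N
    · simp only [extw, dif_pos h]
      exact (continuous_apply (⟨j, h⟩ : Fin N)).comp (continuous_fst.comp continuous_snd)
    · simp only [extw, dif_neg h]
      exact continuous_const
  have htraj : ∀ j : ℕ, Continuous fun t : E => traj A B t.1 (extw t.2.1) j :=
    continuous_traj A B continuous_fst hwcont
  have hres_cont : ∀ k : Fin N, Continuous fun t : E =>
      y ((k : ℕ) + 1) - C *ᵥ traj A B t.1 (extw t.2.1) ((k : ℕ) + 1) - t.2.2 k := by
    intro k
    exact (continuous_const.sub (continuous_mulVec' C (htraj ((k : ℕ) + 1)))).sub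
      ((continuous_apply k).comp (continuous_snd.comp continuous_snd))
  have hcf : Continuous f := by
    have h1 : Continuous fun t : E => (t.1 - xbar) ⬝ᵥ P *ᵥ (t.1 - xbar) :=
      continuous_dm P (continuous_fst.sub continuous_const)
        (continuous_fst.sub continuous_const)
    have h2 : Continuous fun t : E => ∑ k : Fin N, t.2.1 k ⬝ᵥ Q *ᵥ t.2.1 k :=
      continuous_finset_sum _ fun k _ => continuous_dm Q
        ((continuous_apply k).comp (continuous_fst.comp continuous_snd))
        ((continuous_apply k).comp (continuous_fst.comp continuous_snd))
    have h3 : Continuous fun t : E => ∑ k : Fin N,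
        (y ((k : ℕ) + 1) - C *ᵥ traj A B t.1 (extw t.2.1) ((k : ℕ) + 1) - t.2.2 k) ⬝ᵥ
          R *ᵥ (y ((k : ℕ) + 1) - C *ᵥ traj A B t.1 (extw t.2.1) ((k : ℕ) + 1) - t.2.2 k) :=
      continuous_finset_sum _ fun k _ => continuous_dm R (hres_cont k) (hres_cont k)
    have : Continuous fun t : E => (1 / 2 : ℝ) *
        ((t.1 - xbar) ⬝ᵥ P *ᵥ (t.1 - xbar)
          + ∑ k : Fin N, t.2.1 k ⬝ᵥ Q *ᵥ t.2.1 k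
          + ∑ k : Fin N,
              (y ((k : ℕ) + 1) - C *ᵥ traj A B t.1 (extw t.2.1) ((k : ℕ) + 1) - t.2.2 k) ⬝ᵥ
                R *ᵥ (y ((k : ℕ) + 1) - C *ᵥ traj A B t.1 (extw t.2.1) ((k : ℕ) + 1)
                  - t.2.2 k)) :=
      continuous_const.mul ((h1.add h2).add h3)
    exact this
  -- basic nonnegativity facts
  have hterm : ∀ t : E, 0 ≤ (t.1 - xbar) ⬝ᵥ P *ᵥ (t.1 - xbar) ∧
      0 ≤ (∑ k : Fin N, t.2.1 k ⬝ᵥ Q *ᵥ t.2.1 k) ∧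
      0 ≤ ∑ k : Fin N,
        (y ((k : ℕ) + 1) - C *ᵥ traj A B t.1 (extw t.2.1) ((k : ℕ) + 1) - t.2.2 k) ⬝ᵥ
          R *ᵥ (y ((k : ℕ) + 1) - C *ᵥ traj A B t.1 (extw t.2.1) ((k : ℕ) + 1) - t.2.2 k) :=
    fun t => ⟨dot_nonneg' hP.posSemidef _,
      Finset.sum_nonneg fun k _ => dot_nonneg' hQ.posSemidef _,
      Finset.sum_nonneg fun k _ => dot_nonneg' hR.posSemidef _⟩
  -- the reference feasible point and value
  let t0 : E := (xbar, 0, 0)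
  have ht0S : t0 ∈ S := fun k i => by
    simpa [t0] using (hε i).le
  set c0 := f t0 with hc0
  -- the set on which we minimize
  let K : Set E := S ∩ {t | f t ≤ c0}
  have hSclosed : IsClosed S := by
    have : S = ⋂ (k : Fin N), ⋂ (i : Fin m), {t : E | |t.2.2 k i| ≤ ε i} := by
      ext t
      simp [S, Set.mem_iInter]
    rw [this]
    refine isClosed_iInter fun k => isClosed_iInter fun i => ?_
    exact isClosed_le (((continuous_apply i).comp ((continuous_apply k).comp
      (continuous_snd.comp continuous_snd))).abs) continuous_const
  have hKclosed : IsClosed K := hSclosed.inter (isClosed_le hcf continuous_const)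
  -- boundedness of K
  obtain ⟨μP, hμP, hPb⟩ := posdef_bound hP
  obtain ⟨μQ, hμQ, hQb⟩ := posdef_bound hQ
  set rP := Real.sqrt (2 * c0 / μP) with hrP
  set rQ := Real.sqrt (2 * c0 / μQ) with hrQ
  set r := max (rP + ‖xbar‖) (max rQ ‖ε‖) with hr
  have hKsub : K ⊆ Metric.closedBall (0 : E) r := by
    rintro t ⟨htS, htc⟩
    obtain ⟨hTP, hTQ, hTR⟩ := hterm t
    have hft : f t = (1 / 2) * ((t.1 - xbar) ⬝ᵥ P *ᵥ (t.1 - xbar)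
        + ∑ k : Fin N, t.2.1 k ⬝ᵥ Q *ᵥ t.2.1 k
        + ∑ k : Fin N,
            (y ((k : ℕ) + 1) - C *ᵥ traj A B t.1 (extw t.2.1) ((k : ℕ) + 1) - t.2.2 k) ⬝ᵥ
              R *ᵥ (y ((k : ℕ) + 1) - C *ᵥ traj A B t.1 (extw t.2.1) ((k : ℕ) + 1)
                - t.2.2 k)) := epsCostFin_eq A B C P Q R xbar y t.1 t.2.1 t.2.2
    have hfc : f t ≤ c0 := htc
    rw [hft] at hfc
    have hbx : ‖t.1‖ ≤ rP + ‖xbar‖ := by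
      have h1 : μP * ‖t.1 - xbar‖ ^ 2 ≤ 2 * c0 := by
        have := hPb (t.1 - xbar)
        linarith
      have h2 : ‖t.1 - xbar‖ ^ 2 ≤ 2 * c0 / μP := (le_div_iff₀ hμP).mpr (by linarith)
      have h3 : ‖t.1 - xbar‖ ≤ rP := by
        rw [hrP, ← Real.sqrt_sq (norm_nonneg (t.1 - xbar))]
        exact Real.sqrt_le_sqrt h2
      calc ‖t.1‖ = ‖(t.1 - xbar) + xbar‖ := by rw [sub_add_cancel]
        _ ≤ ‖t.1 - xbar‖ + ‖xbar‖ := norm_add_le _ _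
        _ ≤ rP + ‖xbar‖ := by linarith
    have hbw : ‖t.2.1‖ ≤ rQ := by
      refine (pi_norm_le_iff_of_nonneg (Real.sqrt_nonneg _)).mpr fun k => ?_
      have hk : t.2.1 k ⬝ᵥ Q *ᵥ t.2.1 k ≤ 2 * c0 := by
        have hsingle : t.2.1 k ⬝ᵥ Q *ᵥ t.2.1 k ≤ ∑ j : Fin N, t.2.1 j ⬝ᵥ Q *ᵥ t.2.1 j :=
          Finset.single_le_sum (fun j _ => dot_nonneg' hQ.posSemidef _) (Finset.mem_univ k)
        linarith
      have h1 : μQ * ‖t.2.1 k‖ ^ 2 ≤ 2 * c0 := le_trans (hQb (t.2.1 k)) hk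
      have h2 : ‖t.2.1 k‖ ^ 2 ≤ 2 * c0 / μQ := (le_div_iff₀ hμQ).mpr (by linarith)
      rw [← Real.sqrt_sq (norm_nonneg (t.2.1 k))]
      exact Real.sqrt_le_sqrt h2
    have hbη : ‖t.2.2‖ ≤ ‖ε‖ := by
      refine (pi_norm_le_iff_of_nonneg (norm_nonneg ε)).mpr fun k => ?_
      refine (pi_norm_le_iff_of_nonneg (norm_nonneg ε)).mpr fun i => ?_
      calc ‖t.2.2 k i‖ = |t.2.2 k i| := Real.norm_eq_abs _
        _ ≤ ε i := htS k i
        _ ≤ |ε i| := le_abs_self _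
        _ = ‖ε i‖ := (Real.norm_eq_abs _).symm
        _ ≤ ‖ε‖ := norm_le_pi_norm ε i
    rw [Metric.mem_closedBall, dist_zero_right]
    have : ‖t‖ = max ‖t.1‖ (max ‖t.2.1‖ ‖t.2.2‖) := by
      rw [Prod.norm_def, Prod.norm_def]
    rw [this, hr]
    exact max_le_max hbx (max_le_max hbw hbη)
  have hKcompact : IsCompact K :=
    (isCompact_closedBall (0 : E) r).of_isClosed_subset hKclosed hKsub
  have ht0K : t0 ∈ K := ⟨ht0S, by simp only [Set.mem_setOf_eq, hc0, le_refl]⟩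
  obtain ⟨ts, htsK, hmin⟩ := hKcompact.exists_isMinOn ⟨t0, ht0K⟩ hcf.continuousOn
  -- ts is a global minimizer on S
  have hglobal : ∀ t' ∈ S, f ts ≤ f t' := by
    intro t' ht'
    by_cases h : f t' ≤ c0
    · exact isMinOn_iff.mp hmin t' ⟨ht', h⟩
    · push_neg at h
      exact le_trans (isMinOn_iff.mp hmin t0 ht0K) h.le
  refine ⟨ts, ⟨htsK.1, fun t' ht' => hglobal t' ht'⟩, ?_⟩
  -- uniqueness
  rintro ⟨sx, sw, sη⟩ ⟨hsfeas, hsmin⟩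
  have htsfeas : ts ∈ S := htsK.1
  have hsS : ((sx, sw, sη) : E) ∈ S := hsfeas
  have hfeq : f (sx, sw, sη) = f ts :=
    le_antisymm (hsmin ts htsfeas) (hglobal _ hsS)
  -- the midpoint
  let tm : E := ((1/2 : ℝ) • (sx + ts.1), fun k => (1/2 : ℝ) • (sw k + ts.2.1 k),
    fun k => (1/2 : ℝ) • (sη k + ts.2.2 k))
  have htmS : tm ∈ S := by
    intro k i
    have h1 := hsfeas k i
    have h2 := htsfeas k i
    have h3 := abs_add_le (sη k i) (ts.2.2 k i)
    have : |(1/2 : ℝ) * (sη k i + ts.2.2 k i)| = (1/2) * |sη k i + ts.2.2 k i| := by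
      rw [abs_mul]; norm_num
    calc |tm.2.2 k i| = (1/2) * |sη k i + ts.2.2 k i| := this
      _ ≤ (1/2) * (|sη k i| + |ts.2.2 k i|) := by linarith
      _ ≤ ε i := by linarith
  -- residuals
  let r1 : Fin N → Fin m → ℝ := fun k =>
    y ((k : ℕ) + 1) - C *ᵥ traj A B sx (extw sw) ((k : ℕ) + 1) - sη k
  let r2 : Fin N → Fin m → ℝ := fun k =>
    y ((k : ℕ) + 1) - C *ᵥ traj A B ts.1 (extw ts.2.1) ((k : ℕ) + 1) - ts.2.2 k
  have hxm : tm.1 - xbar = (1/2 : ℝ) • ((sx - xbar) + (ts.1 - xbar)) := by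
    funext i
    simp only [tm, Pi.sub_apply, Pi.smul_apply, Pi.add_apply, smul_eq_mul]
    ring
  have hrm : ∀ k : Fin N,
      y ((k : ℕ) + 1) - C *ᵥ traj A B tm.1 (extw tm.2.1) ((k : ℕ) + 1) - tm.2.2 k
        = (1/2 : ℝ) • (r1 k + r2 k) := by
    intro k
    have hwm : extw (tm.2.1) = fun j => (1/2 : ℝ) • (extw sw j + extw ts.2.1 j) :=
      extw_mid sw ts.2.1
    have htm : traj A B tm.1 (extw tm.2.1) ((k : ℕ) + 1)
        = (1/2 : ℝ) • (traj A B sx (extw sw) ((k : ℕ) + 1)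
            + traj A B ts.1 (extw ts.2.1) ((k : ℕ) + 1)) := by
      rw [hwm]
      exact traj_mid A B sx ts.1 (extw sw) (extw ts.2.1) ((k : ℕ) + 1)
    rw [htm]
    funext i
    simp only [tm, r1, r2, Pi.sub_apply, Pi.smul_apply, Pi.add_apply, mulVec_smul, mulVec_add,
      smul_eq_mul]
    ring
  -- strict-convexity defect terms
  let DP : ℝ := ((1/2 : ℝ) • (sx - ts.1)) ⬝ᵥ P *ᵥ ((1/2 : ℝ) • (sx - ts.1))
  let DQ : Fin N → ℝ := fun k =>
    ((1/2 : ℝ) • (sw k - ts.2.1 k)) ⬝ᵥ Q *ᵥ ((1/2 : ℝ) • (sw k - ts.2.1 k))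
  let DR : Fin N → ℝ := fun k =>
    ((1/2 : ℝ) • (r1 k - r2 k)) ⬝ᵥ R *ᵥ ((1/2 : ℝ) • (r1 k - r2 k))
  have key : f tm = (f (sx, sw, sη) + f ts)/2
      - (1/2) * (DP + (∑ k : Fin N, DQ k) + (∑ k : Fin N, DR k)) := by
    have e1 : (tm.1 - xbar) ⬝ᵥ P *ᵥ (tm.1 - xbar)
        = ((sx - xbar) ⬝ᵥ P *ᵥ (sx - xbar) + (ts.1 - xbar) ⬝ᵥ P *ᵥ (ts.1 - xbar))/2 - DP := by
      rw [hxm, quad_mid']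
      have : (sx - xbar) - (ts.1 - xbar) = sx - ts.1 := by abel
      rw [this]
    have e2 : ∀ k : Fin N, (tm.2.1 k) ⬝ᵥ Q *ᵥ (tm.2.1 k)
        = (sw k ⬝ᵥ Q *ᵥ sw k + ts.2.1 k ⬝ᵥ Q *ᵥ ts.2.1 k)/2 - DQ k := fun k =>
      quad_mid' Q (sw k) (ts.2.1 k)
    have e3 : ∀ k : Fin N,
        (y ((k : ℕ) + 1) - C *ᵥ traj A B tm.1 (extw tm.2.1) ((k : ℕ) + 1) - tm.2.2 k) ⬝ᵥ
          R *ᵥ (y ((k : ℕ) + 1) - C *ᵥ traj A B tm.1 (extw tm.2.1) ((k : ℕ) + 1) - tm.2.2 k)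
        = (r1 k ⬝ᵥ R *ᵥ r1 k + r2 k ⬝ᵥ R *ᵥ r2 k)/2 - DR k := by
      intro k
      rw [hrm k]
      exact quad_mid' R (r1 k) (r2 k)
    have hftm : f tm = (1 / 2) * ((tm.1 - xbar) ⬝ᵥ P *ᵥ (tm.1 - xbar)
        + ∑ k : Fin N, tm.2.1 k ⬝ᵥ Q *ᵥ tm.2.1 k
        + ∑ k : Fin N,
            (y ((k : ℕ) + 1) - C *ᵥ traj A B tm.1 (extw tm.2.1) ((k : ℕ) + 1) - tm.2.2 k) ⬝ᵥ
              R *ᵥ (y ((k : ℕ) + 1) - C *ᵥ traj A B tm.1 (extw tm.2.1) ((k : ℕ) + 1)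
                - tm.2.2 k)) := epsCostFin_eq A B C P Q R xbar y tm.1 tm.2.1 tm.2.2
    have hfs : f (sx, sw, sη) = (1 / 2) * ((sx - xbar) ⬝ᵥ P *ᵥ (sx - xbar)
        + ∑ k : Fin N, sw k ⬝ᵥ Q *ᵥ sw k
        + ∑ k : Fin N, r1 k ⬝ᵥ R *ᵥ r1 k) :=
      epsCostFin_eq A B C P Q R xbar y sx sw sη
    have hfts : f ts = (1 / 2) * ((ts.1 - xbar) ⬝ᵥ P *ᵥ (ts.1 - xbar)
        + ∑ k : Fin N, ts.2.1 k ⬝ᵥ Q *ᵥ ts.2.1 k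
        + ∑ k : Fin N, r2 k ⬝ᵥ R *ᵥ r2 k) :=
      epsCostFin_eq A B C P Q R xbar y ts.1 ts.2.1 ts.2.2
    rw [hftm, hfs, hfts, e1, Finset.sum_congr rfl (fun k _ => e2 k),
      Finset.sum_congr rfl (fun k _ => e3 k), Finset.sum_sub_distrib,
      Finset.sum_sub_distrib, ← Finset.sum_div, ← Finset.sum_div,
      Finset.sum_add_distrib, Finset.sum_add_distrib]
    ring
  have hle : f (sx, sw, sη) ≤ f tm := hsmin tm htmS
  have hDP : 0 ≤ DP := dot_nonneg' hP.posSemidef _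
  have hDQ : ∀ k, 0 ≤ DQ k := fun k => dot_nonneg' hQ.posSemidef _
  have hDR : ∀ k, 0 ≤ DR k := fun k => dot_nonneg' hR.posSemidef _
  have hSQ : 0 ≤ ∑ k : Fin N, DQ k := Finset.sum_nonneg fun k _ => hDQ k
  have hSR : 0 ≤ ∑ k : Fin N, DR k := Finset.sum_nonneg fun k _ => hDR k
  have hD : DP + (∑ k : Fin N, DQ k) + (∑ k : Fin N, DR k) ≤ 0 := by
    rw [key, hfeq] at hle
    linarith
  have half_ne : (1/2 : ℝ) ≠ 0 := by norm_num
  -- x-components agree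
  have hx : sx = ts.1 := by
    have h0 : DP ≤ 0 := by linarith
    have := eq_zero_of_dot_le_zero hP h0
    rcases smul_eq_zero.mp this with h | h
    · exact absurd h half_ne
    · exact sub_eq_zero.mp h
  -- w-components agree
  have hw : sw = ts.2.1 := by
    funext k
    have hk : DQ k ≤ 0 := by
      have hsingle : DQ k ≤ ∑ j : Fin N, DQ j :=
        Finset.single_le_sum (fun j _ => hDQ j) (Finset.mem_univ k)
      linarith
    have := eq_zero_of_dot_le_zero hQ hk
    rcases smul_eq_zero.mp this with h | h
    · exact absurd h half_ne
    · exact sub_eq_zero.mp h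
  -- η-components agree
  have hη : sη = ts.2.2 := by
    funext k
    have hk : DR k ≤ 0 := by
      have hsingle : DR k ≤ ∑ j : Fin N, DR j :=
        Finset.single_le_sum (fun j _ => hDR j) (Finset.mem_univ k)
      linarith
    have hzero := eq_zero_of_dot_le_zero hR hk
    have hr12 : r1 k = r2 k := by
      rcases smul_eq_zero.mp hzero with h | h
      · exact absurd h half_ne
      · exact sub_eq_zero.mp h
    have : traj A B sx (extw sw) ((k : ℕ) + 1) = traj A B ts.1 (extw ts.2.1) ((k : ℕ) + 1) := by
      rw [hx, hw]
    have h' : y ((k : ℕ) + 1) - C *ᵥ traj A B ts.1 (extw ts.2.1) ((k : ℕ) + 1) - sη k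
        = y ((k : ℕ) + 1) - C *ᵥ traj A B ts.1 (extw ts.2.1) ((k : ℕ) + 1) - ts.2.2 k := by
      have h1 : r1 k = y ((k : ℕ) + 1) - C *ᵥ traj A B ts.1 (extw ts.2.1) ((k : ℕ) + 1)
          - sη k := by
        simp only [r1, this]
      have h2 : r2 k = y ((k : ℕ) + 1) - C *ᵥ traj A B ts.1 (extw ts.2.1) ((k : ℕ) + 1)
          - ts.2.2 k := rfl
      rw [← h1, ← h2, hr12]
    exact sub_right_injective h'
  calc ((sx, sw, sη) : E) = (ts.1, ts.2.1, ts.2.2) := by rw [hx, hw, hη]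
    _ = ts := rfl
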